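/- Let κ be a power of 2 and let C_S, C_T be legal configurations for capacity κ with |C_S| = |C_T| and U(C_S) = U(C_T), such that every item of U(C_S) is a power of 2. Suppose that some item size occurring in C_S is not settled in C_S with respect to C_T, and let ℓ be the largest item size occurring in C_S that is not settled in C_S with respect to C_T. Then C_S is reconfigurable to C_T for capacity κ if and only if the total slack Σ_{B ∈ C_S} slack(B) is at least ℓ. -/

import Mathlib

/-- A bunch is a multiset of items (item = positive integer, encoded as `ℕ`). -/
abbrev Bunch := Multiset ℕ

/-- A configuration is a multiset of bunches. -/
abbrev Config := Multiset Bunch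

/-- The volume of a bunch is the sum of its items. -/
def vol (B : Bunch) : ℕ := B.sum

/-- A configuration is legal for capacity `κ` if every bunch has volume at most `κ`. -/
def Legal (κ : ℕ) (C : Config) : Prop := ∀ B ∈ C, vol B ≤ κ

/-- The total slack of a configuration for capacity `κ`. -/
def slackSum (κ : ℕ) (C : Config) : ℕ := (C.map fun B => κ - vol B).sum

/-- `C'` is obtained from `C` by moving the single item `u` from a donor bunch `Bd`
to a (different occurrence of a) recipient bunch `Br`, respecting the capacity `κ`. -/
def AdjacentVia (κ u : ℕ) (C C' : Config) : Prop :=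
  ∃ (rest : Config) (Bd Br : Bunch),
    u ∈ Bd ∧ vol Br + u ≤ κ ∧
    C = Bd ::ₘ Br ::ₘ rest ∧ C' = Bd.erase u ::ₘ (u ::ₘ Br) ::ₘ rest

/-- Two configurations are adjacent if one is obtained from the other by moving a single item. -/
def Adjacent (κ : ℕ) (C C' : Config) : Prop := ∃ u, AdjacentVia κ u C C'

/-- One step of a reconfiguration sequence: both configurations are legal and adjacent. -/
def Step (κ : ℕ) (C C' : Config) : Prop := Legal κ C ∧ Legal κ C' ∧ Adjacent κ C C'

/-- `CS` is reconfigurable to `CT` for capacity `κ`: there is a sequence of legal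
configurations for capacity `κ` from `CS` to `CT` with consecutive ones adjacent. -/
def Reconfigurable (κ : ℕ) (CS CT : Config) : Prop :=
  Relation.ReflTransGen (Step κ) CS CT

/-- The multiset of items of `B` of size at least `s`. -/
def AtLeast (s : ℕ) (B : Bunch) : Bunch := B.filter (s ≤ ·)

instance (s : ℕ) (B : Multiset ℕ) : Decidable (∃ x ∈ B, s ≤ x) :=
  Multiset.decidableExistsMultiset

/-- The multiset of bunches of `D` containing an item of size at least `s`. -/
def BunchesWith (s : ℕ) (D : Config) : Config :=
  D.filter fun B => ∃ x ∈ B, s ≤ x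

/-- Item size `s` is settled in `D` with respect to `CT`: there is a bijection `φ`
(a multiplicity-respecting pairing) from the multiset of bunches of `D` containing an
item of size at least `s` to the multiset of such bunches of `CT` with
`D_{≥s}(B) = (CT)_{≥s}(φ B)` for every `B` in the domain. -/
def Settled (s : ℕ) (D CT : Config) : Prop :=
  Multiset.Rel (fun B B' => AtLeast s B = AtLeast s B') (BunchesWith s D) (BunchesWith s CT)

/- ==================== basic multiset helpers ==================== -/

lemma mem_sum_of_mem {x : ℕ} {B : Bunch} {C : Config} (hx : x ∈ B) (hB : B ∈ C) :
    x ∈ C.sum := by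
  induction C using Multiset.induction_on with
  | empty => simp at hB
  | cons a t ih =>
    rw [Multiset.sum_cons]
    rcases Multiset.mem_cons.1 hB with h | h
    · subst h; exact Multiset.mem_add.2 (Or.inl hx)
    · exact Multiset.mem_add.2 (Or.inr (ih h))

lemma count_config_sum (a : ℕ) (C : Config) :
    Multiset.count a C.sum = (C.map (Multiset.count a)).sum := by
  induction C using Multiset.induction_on with
  | empty => simp
  | cons b t ih => simp [Multiset.sum_cons, ih]

lemma sum_config_sum (C : Config) : C.sum.sum = (C.map vol).sum := by
  induction C using Multiset.induction_on with
  | empty => simp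
  | cons b t ih => simp [Multiset.sum_cons, ih, vol]

lemma vol_erase {B : Bunch} {u : ℕ} (hu : u ∈ B) : vol (B.erase u) = vol B - u := by
  have : u ::ₘ B.erase u = B := Multiset.cons_erase hu
  have h2 : vol B = u + vol (B.erase u) := by
    conv_lhs => rw [← this]
    rw [vol, Multiset.sum_cons]; rfl
  omega

lemma le_vol {B : Bunch} {u : ℕ} (hu : u ∈ B) : u ≤ vol B :=
  Multiset.single_le_sum (fun x _ => Nat.zero_le x) u hu

lemma vol_le_of_le {A B : Bunch} (h : A ≤ B) : vol A ≤ vol B := by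
  obtain ⟨C, rfl⟩ := Multiset.le_iff_exists_add.1 h
  simp [vol]

lemma vol_atLeast_le (s : ℕ) (B : Bunch) : vol (AtLeast s B) ≤ vol B :=
  vol_le_of_le (Multiset.filter_le _ _)

/- AtLeast under small cons/erase -/
lemma atLeast_cons_of_lt {s u : ℕ} (h : u < s) (B : Bunch) :
    AtLeast s (u ::ₘ B) = AtLeast s B := by
  unfold AtLeast
  rw [Multiset.filter_cons_of_neg]
  omega

lemma atLeast_erase_of_lt {s u : ℕ} (h : u < s) {B : Bunch} (hu : u ∈ B) :
    AtLeast s (B.erase u) = AtLeast s B := by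
  conv_rhs => rw [← Multiset.cons_erase hu]
  rw [atLeast_cons_of_lt h]

lemma atLeast_atLeast (s t : ℕ) (h : s ≤ t) (B : Bunch) :
    AtLeast t (AtLeast s B) = AtLeast t B := by
  unfold AtLeast
  rw [Multiset.filter_filter]
  exact Multiset.filter_congr (fun x _ => by constructor <;> intro hh <;> omega)

lemma count_atLeast {s a : ℕ} (h : s ≤ a) (B : Bunch) :
    Multiset.count a (AtLeast s B) = Multiset.count a B := by
  unfold AtLeast
  rw [Multiset.count_filter, if_pos h]

/- powers of two facts -/
lemma pow_dvd_of_le {a b : ℕ} (ha : ∃ i, a = 2 ^ i) (hb : ∃ j, b = 2 ^ j) (h : a ≤ b) :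
    a ∣ b := by
  obtain ⟨i, rfl⟩ := ha; obtain ⟨j, rfl⟩ := hb
  exact pow_dvd_pow 2 ((Nat.pow_le_pow_iff_right (by norm_num)).1 h)

lemma pow_pos' {a : ℕ} (ha : ∃ i, a = 2 ^ i) : 0 < a := by
  obtain ⟨i, rfl⟩ := ha; positivity

lemma pow_two_le_of_lt {a b : ℕ} (ha : ∃ i, a = 2 ^ i) (hb : ∃ j, b = 2 ^ j) (h : a < b) :
    2 * a ≤ b := by
  obtain ⟨i, rfl⟩ := ha; obtain ⟨j, rfl⟩ := hb
  have : i < j := (Nat.pow_lt_pow_iff_right (by norm_num)).1 h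
  calc 2 * 2 ^ i = 2 ^ (i + 1) := by ring
  _ ≤ 2 ^ j := Nat.pow_le_pow_right (by norm_num) (by omega)

/- ==================== step invariants ==================== -/

lemma adjacentVia_card {κ u : ℕ} {C C' : Config} (h : AdjacentVia κ u C C') :
    Multiset.card C' = Multiset.card C := by
  obtain ⟨rest, Bd, Br, _, _, rfl, rfl⟩ := h; simp

lemma adjacentVia_sum {κ u : ℕ} {C C' : Config} (h : AdjacentVia κ u C C') :
    C'.sum = C.sum := by
  obtain ⟨rest, Bd, Br, hu, _, rfl, rfl⟩ := h
  simp only [Multiset.sum_cons]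
  have : u ::ₘ Bd.erase u = Bd := Multiset.cons_erase hu
  calc Bd.erase u + ((u ::ₘ Br) + rest.sum) = (u ::ₘ Bd.erase u) + (Br + rest.sum) := by
        rw [← Multiset.singleton_add u Br, ← Multiset.singleton_add u (Bd.erase u)]; abel
  _ = Bd + (Br + rest.sum) := by rw [this]

lemma step_card {κ : ℕ} {C C' : Config} (h : Step κ C C') :
    Multiset.card C' = Multiset.card C := by
  obtain ⟨_, _, u, ha⟩ := h; exact adjacentVia_card ha

lemma step_sum {κ : ℕ} {C C' : Config} (h : Step κ C C') : C'.sum = C.sum := by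
  obtain ⟨_, _, u, ha⟩ := h; exact adjacentVia_sum ha

lemma slackSum_eq {κ : ℕ} {C : Config} (h : Legal κ C) :
    slackSum κ C = κ * Multiset.card C - C.sum.sum := by
  have key : slackSum κ C + (C.map vol).sum = κ * Multiset.card C := by
    rw [slackSum, ← Multiset.sum_map_add]
    have : (C.map fun B => κ - vol B + vol B) = C.map (fun _ => κ) :=
      Multiset.map_congr rfl (fun B hB => by have := h B hB; omega)
    rw [this, Multiset.map_const', Multiset.sum_replicate, smul_eq_mul, mul_comm]
  rw [sum_config_sum]
  omega

lemma step_slackSum {κ : ℕ} {C C' : Config} (h : Step κ C C') :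
    slackSum κ C' = slackSum κ C := by
  rw [slackSum_eq h.2.1, slackSum_eq h.1, step_card h, step_sum h]

lemma reach_card {κ : ℕ} {C C' : Config} (h : Reconfigurable κ C C') :
    Multiset.card C' = Multiset.card C := by
  induction h with
  | refl => rfl
  | tail _ hs ih => rw [step_card hs, ih]

lemma reach_sum {κ : ℕ} {C C' : Config} (h : Reconfigurable κ C C') : C'.sum = C.sum := by
  induction h with
  | refl => rfl
  | tail _ hs ih => rw [step_sum hs, ih]

lemma reach_slackSum {κ : ℕ} {C C' : Config} (h : Reconfigurable κ C C') :
    slackSum κ C' = slackSum κ C := by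
  induction h with
  | refl => rfl
  | tail _ hs ih => rw [step_slackSum hs, ih]

lemma reach_legal {κ : ℕ} {C C' : Config} (h : Reconfigurable κ C C') (hC : Legal κ C) :
    Legal κ C' := by
  induction h with
  | refl => exact hC
  | tail _ hs _ => exact hs.2.1

/- ==================== bounded-size steps ==================== -/

def StepLE (κ b : ℕ) (C C' : Config) : Prop :=
  Legal κ C ∧ Legal κ C' ∧ ∃ u, u ≤ b ∧ AdjacentVia κ u C C'

def ReachLE (κ b : ℕ) : Config → Config → Prop := Relation.ReflTransGen (StepLE κ b)

lemma stepLE_step {κ b : ℕ} {C C' : Config} (h : StepLE κ b C C') : Step κ C C' :=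
  ⟨h.1, h.2.1, h.2.2.imp fun _ hu => hu.2⟩

lemma reachLE_reconf {κ b : ℕ} {C C' : Config} (h : ReachLE κ b C C') :
    Reconfigurable κ C C' :=
  Relation.ReflTransGen.mono (fun _ _ => stepLE_step) _ _ h

lemma reachLE_mono {κ b b' : ℕ} (hb : b ≤ b') {C C' : Config} (h : ReachLE κ b C C') :
    ReachLE κ b' C C' :=
  Relation.ReflTransGen.mono
    (fun _ _ hs => ⟨hs.1, hs.2.1, hs.2.2.imp fun u hu => ⟨hu.1.trans hb, hu.2⟩⟩) _ _ h

lemma legal_cons {κ : ℕ} {A : Bunch} {C : Config} :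
    Legal κ (A ::ₘ C) ↔ vol A ≤ κ ∧ Legal κ C := by
  constructor
  · intro h
    exact ⟨h A (Multiset.mem_cons_self _ _), fun B hB => h B (Multiset.mem_cons_of_mem hB)⟩
  · rintro ⟨h1, h2⟩ B hB
    rcases Multiset.mem_cons.1 hB with h | h
    · subst h; exact h1
    · exact h2 B h

lemma reachLE_cons {κ b : ℕ} {A : Bunch} (hA : vol A ≤ κ) {C C' : Config}
    (h : ReachLE κ b C C') : ReachLE κ b (A ::ₘ C) (A ::ₘ C') := by
  induction h with
  | refl => exact Relation.ReflTransGen.refl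
  | tail _ hs ih =>
    refine ih.tail ?_
    obtain ⟨hl1, hl2, u, hub, rest, Bd, Br, h1, h2, rfl, rfl⟩ := hs
    refine ⟨legal_cons.2 ⟨hA, hl1⟩, legal_cons.2 ⟨hA, hl2⟩, u, hub, A ::ₘ rest, Bd, Br,
      h1, h2, ?_, ?_⟩
    · rw [Multiset.cons_swap A Bd, Multiset.cons_swap A Br]
    · rw [Multiset.cons_swap A (Bd.erase u), Multiset.cons_swap A (u ::ₘ Br)]

lemma reachLE_legal {κ b : ℕ} {C C' : Config} (h : ReachLE κ b C C') (hC : Legal κ C) :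
    Legal κ C' := reach_legal (reachLE_reconf h) hC

/- small moves preserve AtLeast-s structure -/
lemma stepLE_map_atLeast {κ b s : ℕ} (hbs : b < s) {C C' : Config}
    (h : StepLE κ b C C') : C'.map (AtLeast s) = C.map (AtLeast s) := by
  obtain ⟨_, _, u, hub, rest, Bd, Br, h1, h2, rfl, rfl⟩ := h
  have hus : u < s := by omega
  simp only [Multiset.map_cons]
  rw [atLeast_erase_of_lt hus h1, atLeast_cons_of_lt hus]

lemma reachLE_map_atLeast {κ b s : ℕ} (hbs : b < s) {C C' : Config}
    (h : ReachLE κ b C C') : C'.map (AtLeast s) = C.map (AtLeast s) := by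
  induction h with
  | refl => rfl
  | tail _ hs ih => rw [stepLE_map_atLeast hbs hs, ih]

/- ==================== makeSlack ==================== -/

lemma min_item_exists {A : Bunch} (hA : A ≠ 0) :
    ∃ w ∈ A, ∀ x ∈ A, w ≤ x := by
  have hne : A.toFinset.Nonempty := by
    rw [Multiset.toFinset_nonempty]; exact hA
  refine ⟨A.toFinset.min' hne, Multiset.mem_toFinset.1 (A.toFinset.min'_mem hne),
    fun x hx => A.toFinset.min'_le x (Multiset.mem_toFinset.2 hx)⟩

lemma slackSum_cons (κ : ℕ) (A : Bunch) (F : Config) :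
    slackSum κ (A ::ₘ F) = (κ - vol A) + slackSum κ F := by
  simp [slackSum, Multiset.sum_cons]

lemma dvd_slack {κ : ℕ} (hκ : ∃ k, κ = 2 ^ k) {A : Bunch} {w : ℕ} (hw0 : w ∈ A)
    (hpow : ∀ x ∈ A, ∃ i, x = 2 ^ i) (hw : ∃ i, w = 2 ^ i)
    (hmin : ∀ x ∈ A, w ≤ x) (hvol : vol A ≤ κ) : w ∣ (κ - vol A) := by
  have h1 : w ∣ vol A := Multiset.dvd_sum (fun x hx => pow_dvd_of_le hw (hpow x hx) (hmin x hx))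
  have h2 : w ∣ κ := pow_dvd_of_le hw hκ ((le_vol hw0).trans hvol)
  exact Nat.dvd_sub h2 h1
lemma makeSlackInner (κ : ℕ) (hκ : ∃ k, κ = 2 ^ k) (n : ℕ)
    (IH : ∀ m, m < n → ∀ F : Config, Multiset.card F = m → Legal κ F →
      (∀ x ∈ F.sum, ∃ i, x = 2 ^ i) → ∀ w, (∃ i, w = 2 ^ i) → w ≤ κ → w ≤ slackSum κ F →
      ∃ (C : Bunch) (F' : Config), ReachLE κ w F (C ::ₘ F') ∧ vol C + w ≤ κ) :
    ∀ v (A : Bunch) (F0 : Config), vol A = v → Multiset.card (A ::ₘ F0) = n →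
      Legal κ (A ::ₘ F0) → (∀ x ∈ (A ::ₘ F0).sum, ∃ i, x = 2 ^ i) →
      ∀ u, (∃ i, u = 2 ^ i) → u ≤ κ → u ≤ slackSum κ (A ::ₘ F0) →
      ∃ (C : Bunch) (F' : Config), ReachLE κ u (A ::ₘ F0) (C ::ₘ F') ∧ vol C + u ≤ κ := by
  intro v
  induction v using Nat.strong_induction_on with
  | _ v ihv =>
  intro A F0 hvA hcard hleg hpw u hu huκ huslack
  have hlegA : vol A ≤ κ := (legal_cons.1 hleg).1
  have hlegF0 : Legal κ F0 := (legal_cons.1 hleg).2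
  by_cases hdone : vol A + u ≤ κ
  · exact ⟨A, F0, Relation.ReflTransGen.refl, hdone⟩
  by_cases hF0 : u ≤ slackSum κ F0
  · obtain ⟨C, F', hreach, hC⟩ := IH (Multiset.card F0) (by simp at hcard; omega) F0 rfl
      hlegF0 (fun x hx => hpw x (by rw [Multiset.sum_cons]; exact Multiset.mem_add.2 (Or.inr hx)))
      u hu huκ hF0
    refine ⟨C, A ::ₘ F', ?_, hC⟩
    have := reachLE_cons hlegA hreach
    rwa [Multiset.cons_swap A C] at this
  -- main case
  have hpwA : ∀ x ∈ A, ∃ i, x = 2 ^ i := fun x hx =>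
    hpw x (by rw [Multiset.sum_cons]; exact Multiset.mem_add.2 (Or.inl hx))
  have hslackA : κ - vol A < u := by omega
  have hAne : A ≠ 0 := by
    intro h; subst h; simp [vol] at hdone; omega
  obtain ⟨w, hwA, hwmin⟩ := min_item_exists hAne
  have hwpow : ∃ i, w = 2 ^ i := hpwA w hwA
  have hwpos : 0 < w := pow_pos' hwpow
  have hdvd : w ∣ (κ - vol A) := dvd_slack hκ hwA hpwA hwpow hwmin hlegA
  have hslacktot := slackSum_cons κ A F0
  have hwu : w ≤ u := by
    by_contra hgt
    push_neg at hgt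
    rcases Nat.eq_zero_or_pos (κ - vol A) with h0 | hpos
    · omega
    · have : w ≤ κ - vol A := Nat.le_of_dvd hpos hdvd
      omega
  have hwdvdu : w ∣ u := pow_dvd_of_le hwpow hu hwu
  have hwF0 : w ≤ slackSum κ F0 := by
    have h1 : w ∣ (u - (κ - vol A)) := Nat.dvd_sub hwdvdu hdvd
    have h2 : 0 < u - (κ - vol A) := by omega
    have h3 : w ≤ u - (κ - vol A) := Nat.le_of_dvd h2 h1
    omega
  obtain ⟨C, F', hreach, hC⟩ := IH (Multiset.card F0) (by simp at hcard; omega) F0 rfl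
    hlegF0 (fun x hx => hpw x (by rw [Multiset.sum_cons]; exact Multiset.mem_add.2 (Or.inr hx)))
    w hwpow (hwu.trans huκ) hwF0
  have hlift : ReachLE κ u (A ::ₘ F0) (A ::ₘ C ::ₘ F') :=
    reachLE_mono hwu (reachLE_cons hlegA hreach)
  have hleg1 : Legal κ (A ::ₘ C ::ₘ F') := reachLE_legal hlift hleg
  -- the move
  set A' := A.erase w with hA'
  set C' := w ::ₘ C with hC'
  have hlegC' : vol C' ≤ κ := by
    rw [hC', vol, Multiset.sum_cons]
    have : Multiset.sum C = vol C := rfl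
    omega
  have hleg2 : Legal κ (A' ::ₘ C' ::ₘ F') := by
    refine legal_cons.2 ⟨?_, legal_cons.2 ⟨hlegC', (legal_cons.1 (legal_cons.1 hleg1).2).2⟩⟩
    calc vol A' ≤ vol A := vol_le_of_le (Multiset.erase_le _ _)
    _ ≤ κ := hlegA
  have hstep : StepLE κ u (A ::ₘ C ::ₘ F') (A' ::ₘ C' ::ₘ F') :=
    ⟨hleg1, hleg2, w, hwu, F', A, C, hwA, hC, rfl, rfl⟩
  have hreach2 : ReachLE κ u (A ::ₘ F0) (A' ::ₘ C' ::ₘ F') := hlift.tail hstep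
  -- invariants for recursion
  have hvolA' : vol A' = v - w := by rw [hA', vol_erase hwA, hvA]
  have hcard2 : Multiset.card (A' ::ₘ C' ::ₘ F') = n := by
    have := reach_card (reachLE_reconf hreach2)
    omega
  have hsum2 : (A' ::ₘ C' ::ₘ F').sum = (A ::ₘ F0).sum :=
    reach_sum (reachLE_reconf hreach2)
  have hslack2 : slackSum κ (A' ::ₘ C' ::ₘ F') = slackSum κ (A ::ₘ F0) :=
    reach_slackSum (reachLE_reconf hreach2)
  have hwlevol : w ≤ vol A := le_vol hwA
  obtain ⟨Cf, Ff, hreach3, hCf⟩ := ihv (v - w) (by omega) A' (C' ::ₘ F') hvolA' hcard2 hleg2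
    (fun x hx => hpw x (hsum2 ▸ hx)) u hu huκ (hslack2 ▸ huslack)
  exact ⟨Cf, Ff, hreach2.trans hreach3, hCf⟩

lemma makeSlack (κ : ℕ) (hκ : ∃ k, κ = 2 ^ k) :
    ∀ n (F : Config), Multiset.card F = n → Legal κ F →
      (∀ x ∈ F.sum, ∃ i, x = 2 ^ i) → ∀ u, (∃ i, u = 2 ^ i) → u ≤ κ → u ≤ slackSum κ F →
      ∃ (C : Bunch) (F' : Config), ReachLE κ u F (C ::ₘ F') ∧ vol C + u ≤ κ := by
  intro n
  induction n using Nat.strong_induction_on with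
  | _ n ihn =>
  intro F hcard hleg hpw u hu huκ huslack
  have hFne : F ≠ 0 := by
    intro h; subst h
    have := pow_pos' hu
    simp [slackSum] at huslack
    omega
  obtain ⟨A, hA⟩ := Multiset.exists_mem_of_ne_zero hFne
  have hF : A ::ₘ F.erase A = F := Multiset.cons_erase hA
  obtain ⟨C, F', hreach, hC⟩ := makeSlackInner κ hκ n ihn (vol A) A (F.erase A) rfl
    (by rw [hF]; exact hcard) (by rw [hF]; exact hleg) (by rw [hF]; exact hpw)
    u hu huκ (by rw [hF]; exact huslack)
  exact ⟨C, F', by rwa [hF] at hreach, hC⟩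
/- ==================== raiseSlack ==================== -/

lemma raiseSlack (κ s : ℕ) (hκ : ∃ k, κ = 2 ^ k) (hs : ∃ j, s = 2 ^ j) :
    ∀ v (A : Bunch) (F0 : Config), vol A = v → Legal κ (A ::ₘ F0) →
      (∀ x ∈ (A ::ₘ F0).sum, ∃ i, x = 2 ^ i) → s ≤ slackSum κ (A ::ₘ F0) →
      vol (AtLeast s A) + s ≤ κ →
      ∃ (A' : Bunch) (F0' : Config), ReachLE κ (s - 1) (A ::ₘ F0) (A' ::ₘ F0') ∧
        AtLeast s A' = AtLeast s A ∧ F0'.map (AtLeast s) = F0.map (AtLeast s) ∧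
        vol A' + s ≤ κ := by
  intro v
  induction v using Nat.strong_induction_on with
  | _ v ihv =>
  intro A F0 hvA hleg hpw hslack hroom
  have hlegA : vol A ≤ κ := (legal_cons.1 hleg).1
  have hlegF0 : Legal κ F0 := (legal_cons.1 hleg).2
  by_cases hdone : vol A + s ≤ κ
  · exact ⟨A, F0, Relation.ReflTransGen.refl, rfl, rfl, hdone⟩
  -- A has a small item
  have hpwA : ∀ x ∈ A, ∃ i, x = 2 ^ i := fun x hx =>
    hpw x (by rw [Multiset.sum_cons]; exact Multiset.mem_add.2 (Or.inl hx))
  have hAne : A ≠ 0 := by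
    intro h; subst h; simp [vol] at hdone
    have : vol (AtLeast s (0 : Bunch)) = 0 := by simp [AtLeast, vol]
    omega
  obtain ⟨u, huA, humin⟩ := min_item_exists hAne
  have hupow : ∃ i, u = 2 ^ i := hpwA u huA
  have hupos : 0 < u := pow_pos' hupow
  have hus : u < s := by
    by_contra hge
    push_neg at hge
    have hall : AtLeast s A = A :=
      Multiset.filter_eq_self.2 (fun x hx => (hge.trans (humin x hx) : s ≤ x))
    rw [hall] at hroom
    omega
  have hdvdslack : u ∣ (κ - vol A) := dvd_slack hκ huA hpwA hupow humin hlegA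
  have hudvds : u ∣ s := pow_dvd_of_le hupow hs (le_of_lt hus)
  have hslacktot := slackSum_cons κ A F0
  have huF0 : u ≤ slackSum κ F0 := by
    have h1 : u ∣ (s - (κ - vol A)) := Nat.dvd_sub hudvds hdvdslack
    have h2 : 0 < s - (κ - vol A) := by omega
    have h3 : u ≤ s - (κ - vol A) := Nat.le_of_dvd h2 h1
    omega
  obtain ⟨C, F', hreach, hC⟩ := makeSlack κ hκ (Multiset.card F0) F0 rfl hlegF0
    (fun x hx => hpw x (by rw [Multiset.sum_cons]; exact Multiset.mem_add.2 (Or.inr hx)))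
    u hupow ((le_vol huA).trans hlegA) huF0
  have hus1 : u ≤ s - 1 := by omega
  have hlift : ReachLE κ (s - 1) (A ::ₘ F0) (A ::ₘ C ::ₘ F') :=
    reachLE_mono hus1 (reachLE_cons hlegA hreach)
  have hleg1 : Legal κ (A ::ₘ C ::ₘ F') := reachLE_legal hlift hleg
  set A' := A.erase u with hA'
  set C' := u ::ₘ C with hC'
  have hlegC' : vol C' ≤ κ := by
    rw [hC', vol, Multiset.sum_cons]
    have : Multiset.sum C = vol C := rfl
    omega
  have hleg2 : Legal κ (A' ::ₘ C' ::ₘ F') := by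
    refine legal_cons.2 ⟨?_, legal_cons.2 ⟨hlegC', (legal_cons.1 (legal_cons.1 hleg1).2).2⟩⟩
    calc vol A' ≤ vol A := vol_le_of_le (Multiset.erase_le _ _)
    _ ≤ κ := hlegA
  have hstep : StepLE κ (s - 1) (A ::ₘ C ::ₘ F') (A' ::ₘ C' ::ₘ F') :=
    ⟨hleg1, hleg2, u, hus1, F', A, C, huA, hC, rfl, rfl⟩
  have hreach2 : ReachLE κ (s - 1) (A ::ₘ F0) (A' ::ₘ C' ::ₘ F') := hlift.tail hstep
  have hvolA' : vol A' = v - u := by rw [hA', vol_erase huA, hvA]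
  have hsum2 : (A' ::ₘ C' ::ₘ F').sum = (A ::ₘ F0).sum := reach_sum (reachLE_reconf hreach2)
  have hslack2 : slackSum κ (A' ::ₘ C' ::ₘ F') = slackSum κ (A ::ₘ F0) :=
    reach_slackSum (reachLE_reconf hreach2)
  have hulevol : u ≤ vol A := le_vol huA
  have hatA' : AtLeast s A' = AtLeast s A := atLeast_erase_of_lt hus huA
  have hroom' : vol (AtLeast s A') + s ≤ κ := by rw [hatA']; exact hroom
  obtain ⟨A'', F0'', hreach3, hat'', hmap'', hvol''⟩ := ihv (v - u) (by omega) A' (C' ::ₘ F')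
    hvolA' hleg2 (fun x hx => hpw x (hsum2 ▸ hx)) (hslack2 ▸ hslack) hroom'
  refine ⟨A'', F0'', hreach2.trans hreach3, by rw [hat'', hatA'], ?_, hvol''⟩
  -- maps of the F0-side agree
  have hmapmk : (C ::ₘ F').map (AtLeast s) = F0.map (AtLeast s) :=
    reachLE_map_atLeast (by omega) hreach
  rw [hmap'']
  rw [Multiset.map_cons, hC', atLeast_cons_of_lt hus, ← Multiset.map_cons (AtLeast s) C F']
  exact hmapmk
/- ==================== statistics: cls / cnt / above ==================== -/

lemma atLeast_decomp {s : ℕ} (hs : ∃ j, s = 2 ^ j) {B : Bunch}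
    (hB : ∀ x ∈ B, ∃ i, x = 2 ^ i) :
    AtLeast s B = AtLeast (2 * s) B + Multiset.replicate (B.count s) s := by
  have hspos : 0 < s := pow_pos' hs
  ext a
  rw [Multiset.count_add, Multiset.count_replicate]
  unfold AtLeast
  rw [Multiset.count_filter, Multiset.count_filter]
  by_cases has : s = a
  · subst has
    rw [if_pos (le_refl s), if_neg (by omega), if_pos rfl, Nat.zero_add]
  · rw [if_neg has]
    by_cases hmem : a ∈ B
    · have hpa : ∃ i, a = 2 ^ i := hB a hmem
      by_cases h1 : s ≤ a
      · have : 2 * s ≤ a := pow_two_le_of_lt hs hpa (by omega)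
        rw [if_pos h1, if_pos this, Nat.add_zero]
      · rw [if_neg h1, if_neg (by omega)]
    · have : Multiset.count a B = 0 := Multiset.count_eq_zero.2 hmem
      rw [this]
      split <;> split <;> omega

lemma cls_atLeast (s : ℕ) (B : Bunch) :
    AtLeast (2 * s) (AtLeast s B) = AtLeast (2 * s) B :=
  atLeast_atLeast s (2 * s) (by omega) B

lemma cnt_atLeast (s : ℕ) (B : Bunch) :
    (AtLeast s B).count s = B.count s := count_atLeast (le_refl s) B

/-- number of bunches of `X` in class `F` with more than `t` copies of `s` -/
def above (s : ℕ) (X : Config) (F : Bunch) (t : ℕ) : ℕ :=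
  Multiset.card (X.filter (fun B => AtLeast (2 * s) B = F ∧ t < B.count s))

lemma card_filter_mono {p q : Bunch → Prop} [DecidablePred p] [DecidablePred q]
    {X : Config} (h : ∀ B ∈ X, p B → q B) :
    Multiset.card (X.filter p) ≤ Multiset.card (X.filter q) := by
  induction X using Multiset.induction_on with
  | empty => simp
  | cons a t ih =>
    rw [Multiset.filter_cons, Multiset.filter_cons, Multiset.card_add, Multiset.card_add]
    have ht := ih (fun B hB => h B (Multiset.mem_cons_of_mem hB))
    have ha := h a (Multiset.mem_cons_self a t)
    split
    · rw [if_pos (ha (by assumption))]; omega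
    · simp; omega

lemma above_eq_card_map (s : ℕ) (X : Config) (F : Bunch) (t : ℕ) :
    above s X F t = Multiset.card ((X.map (AtLeast s)).filter
      (fun G => AtLeast (2 * s) G = F ∧ t < G.count s)) := by
  rw [Multiset.filter_map]
  rw [Multiset.card_map]
  unfold above
  congr 1
  apply Multiset.filter_congr
  intro B _
  simp only [Function.comp]
  rw [cls_atLeast, cnt_atLeast]

lemma above_congr {s : ℕ} {X Y : Config}
    (h : X.map (AtLeast s) = Y.map (AtLeast s)) (F : Bunch) (t : ℕ) :
    above s X F t = above s Y F t := by
  rw [above_eq_card_map, above_eq_card_map, h]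

lemma above_cons (s : ℕ) (B : Bunch) (X : Config) (F : Bunch) (t : ℕ) :
    above s (B ::ₘ X) F t =
      (if AtLeast (2 * s) B = F ∧ t < B.count s then 1 else 0) + above s X F t := by
  unfold above
  rw [Multiset.filter_cons, Multiset.card_add]
  congr 1
  split <;> simp

lemma above_mono (s : ℕ) (X : Config) (F : Bunch) {t t' : ℕ} (h : t ≤ t') :
    above s X F t' ≤ above s X F t :=
  card_filter_mono (fun B _ hB => ⟨hB.1, by omega⟩)

lemma above_le_classSize (s : ℕ) (X : Config) (F : Bunch) (t : ℕ) :
    above s X F t ≤ Multiset.card (X.filter (fun B => AtLeast (2 * s) B = F)) :=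
  card_filter_mono (fun B _ hB => hB.1)

lemma card_filter_eq_sum_map {p : Bunch → Prop} [DecidablePred p] (X : Config) :
    Multiset.card (X.filter p) = (X.map (fun B => if p B then 1 else 0)).sum := by
  induction X using Multiset.induction_on with
  | empty => simp
  | cons a X ih =>
    rw [Multiset.filter_cons, Multiset.card_add, Multiset.map_cons, Multiset.sum_cons, ih]
    congr 1
    split <;> simp

lemma above_partition (s : ℕ) (X : Config) (F : Bunch) (t : ℕ) :
    above s X F t =
      Multiset.card (X.filter (fun B => AtLeast (2 * s) B = F ∧ B.count s = t + 1)) +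
      above s X F (t + 1) := by
  unfold above
  rw [card_filter_eq_sum_map, card_filter_eq_sum_map, card_filter_eq_sum_map,
    ← Multiset.sum_map_add]
  apply congrArg
  apply Multiset.map_congr rfl
  intro B _
  by_cases hc : AtLeast (2 * s) B = F <;> split_ifs <;> simp_all <;> omega

lemma classSize_partition (s : ℕ) (X : Config) (F : Bunch) :
    Multiset.card (X.filter (fun B => AtLeast (2 * s) B = F)) =
      Multiset.card (X.filter (fun B => AtLeast (2 * s) B = F ∧ B.count s = 0)) +
      above s X F 0 := by
  unfold above
  rw [card_filter_eq_sum_map, card_filter_eq_sum_map, card_filter_eq_sum_map,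
    ← Multiset.sum_map_add]
  apply congrArg
  apply Multiset.map_congr rfl
  intro B _
  by_cases hc : AtLeast (2 * s) B = F <;> split_ifs <;> simp_all <;> omega

/- sum swap helper -/
lemma sum_map_finset_sum {ι : Type*} (T : Finset ι) (X : Config) (φ : ι → Bunch → ℕ) :
    ∑ t ∈ T, (X.map (φ t)).sum = (X.map (fun B => ∑ t ∈ T, φ t B)).sum := by
  induction X using Multiset.induction_on with
  | empty => simp
  | cons a X ih => simp [Multiset.sum_cons, Finset.sum_add_distrib, ih]

lemma sum_above (κ s : ℕ) (X : Config) (F : Bunch)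
    (hcnt : ∀ B ∈ X, B.count s ≤ κ) :
    ∑ t ∈ Finset.range (κ + 1), above s X F t =
      (X.map (fun B => if AtLeast (2 * s) B = F then B.count s else 0)).sum := by
  have h1 : ∀ t, above s X F t = (X.map (fun B =>
      if AtLeast (2 * s) B = F ∧ t < B.count s then 1 else 0)).sum :=
    fun t => card_filter_eq_sum_map X
  simp only [h1]
  rw [sum_map_finset_sum]
  apply congrArg
  apply Multiset.map_congr rfl
  intro B hB
  by_cases hc : AtLeast (2 * s) B = F
  · simp only [hc, true_and]
    rw [Finset.sum_boole]
    have he : (Finset.range (κ + 1)).filter (fun t => t < B.count s) =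
        Finset.range (B.count s) := by
      ext t
      simp only [Finset.mem_filter, Finset.mem_range]
      have := hcnt B hB
      omega
    rw [he, Finset.card_range]
    simp
  · simp [hc]
/- ==================== psi and its properties ==================== -/

lemma cnt_le_kappa {κ s : ℕ} (hs : 0 < s) {B : Bunch} (hB : vol B ≤ κ) :
    B.count s ≤ κ := by
  have h1 : (B.filter (· = s)) = Multiset.replicate (B.count s) s := Multiset.filter_eq' B s
  have h2 : vol (B.filter (· = s)) ≤ vol B := vol_le_of_le (Multiset.filter_le _ _)
  rw [h1] at h2
  have h3 : vol (Multiset.replicate (B.count s) s) = B.count s * s := by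
    simp [vol, Multiset.sum_replicate, smul_eq_mul]
  rw [h3] at h2
  have : B.count s ≤ B.count s * s := Nat.le_mul_of_pos_right _ hs
  omega

lemma classSize_eq {s : ℕ} {X Y : Config}
    (h : X.map (fun B => AtLeast (2 * s) B) = Y.map (fun B => AtLeast (2 * s) B))
    (F : Bunch) :
    Multiset.card (X.filter (fun B => AtLeast (2 * s) B = F)) =
      Multiset.card (Y.filter (fun B => AtLeast (2 * s) B = F)) := by
  have e1 : ∀ Z : Config, Multiset.card (Z.filter (fun B => AtLeast (2 * s) B = F)) =
      Multiset.count F (Z.map (fun B => AtLeast (2 * s) B)) := by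
    intro Z
    rw [Multiset.count_map]
    congr 1
    exact Multiset.filter_congr (fun B _ => eq_comm)
  rw [e1, e1, h]

lemma total_above (κ s : ℕ) (hs : 0 < s) (X : Config) (T : Finset Bunch)
    (hleg : Legal κ X) (hmem : ∀ B ∈ X, AtLeast (2 * s) B ∈ T) :
    ∑ F ∈ T, ∑ t ∈ Finset.range (κ + 1), above s X F t = Multiset.count s X.sum := by
  have hcnt : ∀ B ∈ X, B.count s ≤ κ := fun B hB => cnt_le_kappa hs (hleg B hB)
  have h1 : ∀ F, ∑ t ∈ Finset.range (κ + 1), above s X F t =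
      (X.map (fun B => if AtLeast (2 * s) B = F then B.count s else 0)).sum :=
    fun F => sum_above κ s X F hcnt
  simp only [h1]
  rw [sum_map_finset_sum]
  rw [count_config_sum]
  apply congrArg
  apply Multiset.map_congr rfl
  intro B hB
  have : (∑ F ∈ T, if AtLeast (2 * s) B = F then B.count s else 0) =
      if AtLeast (2 * s) B ∈ T then B.count s else 0 :=
    Finset.sum_ite_eq T (AtLeast (2 * s) B) (fun _ => B.count s)
  rw [this, if_pos (hmem B hB)]

def psi (κ s : ℕ) (CT X : Config) : ℕ :=
  ∑ p ∈ (CT.map (fun B => AtLeast (2 * s) B)).toFinset ×ˢ Finset.range (κ + 1),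
    Nat.dist (above s X p.1 p.2) (above s CT p.1 p.2)

lemma above_eq_zero_of_gt {κ s : ℕ} (hs : 0 < s) {X : Config} (hleg : Legal κ X)
    {t : ℕ} (ht : κ ≤ t) (F : Bunch) : above s X F t = 0 := by
  unfold above
  have : X.filter (fun B => AtLeast (2 * s) B = F ∧ t < B.count s) = 0 :=
    Multiset.filter_eq_nil.2 (fun B hB h => by
      have := cnt_le_kappa hs (hleg B hB); omega)
  rw [this]; rfl

lemma above_eq_zero_of_notmem {s : ℕ} {X CT : Config}
    (h : X.map (fun B => AtLeast (2 * s) B) = CT.map (fun B => AtLeast (2 * s) B))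
    {F : Bunch} (hF : F ∉ (CT.map (fun B => AtLeast (2 * s) B)).toFinset) (t : ℕ) :
    above s X F t = 0 := by
  have h0 : Multiset.count F (CT.map (fun B => AtLeast (2 * s) B)) = 0 :=
    Multiset.count_eq_zero.2 (fun hc => hF (Multiset.mem_toFinset.2 hc))
  have h1 : Multiset.card (X.filter (fun B => AtLeast (2 * s) B = F)) = 0 := by
    rw [classSize_eq h F]
    rw [Multiset.count_map] at h0
    rw [← h0]
    congr 1
    exact Multiset.filter_congr (fun B _ => eq_comm)
  have := above_le_classSize s X F t
  omega

lemma psi_zero_above_eq {κ s : ℕ} (hs : 0 < s) {CT X : Config}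
    (hlegX : Legal κ X) (hlegT : Legal κ CT)
    (hmap : X.map (fun B => AtLeast (2 * s) B) = CT.map (fun B => AtLeast (2 * s) B))
    (hpsi : psi κ s CT X = 0) :
    ∀ F t, above s X F t = above s CT F t := by
  intro F t
  by_cases hF : F ∈ (CT.map (fun B => AtLeast (2 * s) B)).toFinset
  · by_cases ht : t ≤ κ
    · by_cases ht' : t = κ
      · subst ht'
        rw [above_eq_zero_of_gt hs hlegX (le_refl _), above_eq_zero_of_gt hs hlegT (le_refl _)]
      · have hmem : (F, t) ∈ (CT.map (fun B => AtLeast (2 * s) B)).toFinset ×ˢ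
            Finset.range (κ + 1) := Finset.mem_product.2 ⟨hF, Finset.mem_range.2 (by omega)⟩
        have := (Finset.sum_eq_zero_iff.1 hpsi) (F, t) hmem
        exact Nat.eq_of_dist_eq_zero this
    · rw [above_eq_zero_of_gt hs hlegX (by omega), above_eq_zero_of_gt hs hlegT (by omega)]
  · rw [above_eq_zero_of_notmem hmap hF, above_eq_zero_of_notmem rfl hF]

lemma exact_card_eq {κ s : ℕ} (hs : 0 < s) {CT X : Config}
    (hlegX : Legal κ X) (hlegT : Legal κ CT)
    (hmap : X.map (fun B => AtLeast (2 * s) B) = CT.map (fun B => AtLeast (2 * s) B))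
    (hpsi : psi κ s CT X = 0) (F : Bunch) (c : ℕ) :
    Multiset.card (X.filter (fun B => AtLeast (2 * s) B = F ∧ B.count s = c)) =
      Multiset.card (CT.filter (fun B => AtLeast (2 * s) B = F ∧ B.count s = c)) := by
  have habove := psi_zero_above_eq hs hlegX hlegT hmap hpsi
  rcases c with _ | c
  · have h1 := classSize_partition s X F
    have h2 := classSize_partition s CT F
    have h3 := classSize_eq hmap F
    have h4 := habove F 0
    omega
  · have h1 := above_partition s X F c
    have h2 := above_partition s CT F c
    have h5 := habove F c
    have h6 := habove F (c + 1)
    omega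

lemma psi_zero_map_eq {κ s : ℕ} (hs : ∃ j, s = 2 ^ j) {CT X : Config}
    (hlegX : Legal κ X) (hlegT : Legal κ CT)
    (hpwX : ∀ x ∈ X.sum, ∃ i, x = 2 ^ i) (hpwT : ∀ x ∈ CT.sum, ∃ i, x = 2 ^ i)
    (hmap : X.map (fun B => AtLeast (2 * s) B) = CT.map (fun B => AtLeast (2 * s) B))
    (hpsi : psi κ s CT X = 0) :
    X.map (AtLeast s) = CT.map (AtLeast s) := by
  have hspos : 0 < s := pow_pos' hs
  ext G
  rw [Multiset.count_map, Multiset.count_map]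
  have key : ∀ (Z : Config), (∀ x ∈ Z.sum, ∃ i, x = 2 ^ i) →
      (∀ B ∈ Z, (G = AtLeast s B) ↔
        (AtLeast (2 * s) G + Multiset.replicate (G.count s) s = G ∧
          AtLeast (2 * s) B = AtLeast (2 * s) G ∧ B.count s = G.count s)) := by
    intro Z hpwZ B hB
    have hpwB : ∀ x ∈ B, ∃ i, x = 2 ^ i := fun x hx => hpwZ x (mem_sum_of_mem hx hB)
    constructor
    · rintro rfl
      refine ⟨?_, (cls_atLeast s B).symm ▸ rfl, (cnt_atLeast s B).symm ▸ rfl⟩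
      rw [cls_atLeast, cnt_atLeast]
      exact (atLeast_decomp hs hpwB).symm
    · rintro ⟨hgood, hcl, hcn⟩
      rw [atLeast_decomp hs hpwB, hcl, hcn, hgood]
  by_cases hgood : AtLeast (2 * s) G + Multiset.replicate (G.count s) s = G
  · have e1 : X.filter (fun B => G = AtLeast s B) =
        X.filter (fun B => AtLeast (2 * s) B = AtLeast (2 * s) G ∧ B.count s = G.count s) :=
      Multiset.filter_congr (fun B hB => by
        rw [key X hpwX B hB]
        constructor
        · rintro ⟨_, h2, h3⟩; exact ⟨h2, h3⟩
        · rintro ⟨h2, h3⟩; exact ⟨hgood, h2, h3⟩)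
    have e2 : CT.filter (fun B => G = AtLeast s B) =
        CT.filter (fun B => AtLeast (2 * s) B = AtLeast (2 * s) G ∧ B.count s = G.count s) :=
      Multiset.filter_congr (fun B hB => by
        rw [key CT hpwT B hB]
        constructor
        · rintro ⟨_, h2, h3⟩; exact ⟨h2, h3⟩
        · rintro ⟨h2, h3⟩; exact ⟨hgood, h2, h3⟩)
    rw [e1, e2]
    exact exact_card_eq hspos hlegX hlegT hmap hpsi _ _
  · have e1 : X.filter (fun B => G = AtLeast s B) = 0 :=
      Multiset.filter_eq_nil.2 (fun B hB h => hgood ((key X hpwX B hB).1 h).1)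
    have e2 : CT.filter (fun B => G = AtLeast s B) = 0 :=
      Multiset.filter_eq_nil.2 (fun B hB h => hgood ((key CT hpwT B hB).1 h).1)
    rw [e1, e2]
/- ==================== donor / receiver selection ==================== -/

lemma exists_min_by {M : Multiset Bunch} (hM : M ≠ 0) (f : Bunch → ℕ) :
    ∃ A ∈ M, ∀ B ∈ M, f A ≤ f B := by
  have hne : (M.map f).toFinset.Nonempty := by
    rw [Multiset.toFinset_nonempty]
    intro h
    exact hM (Multiset.map_eq_zero.1 h)
  set m := (M.map f).toFinset.min' hne with hm
  have hmem : m ∈ M.map f := Multiset.mem_toFinset.1 ((M.map f).toFinset.min'_mem hne)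
  obtain ⟨A, hA, hfa⟩ := Multiset.mem_map.1 hmem
  refine ⟨A, hA, fun B hB => ?_⟩
  rw [hfa]
  exact (M.map f).toFinset.min'_le (f B) (Multiset.mem_toFinset.2 (Multiset.mem_map_of_mem f hB))

lemma exists_max_by {M : Multiset Bunch} (hM : M ≠ 0) (f : Bunch → ℕ) :
    ∃ A ∈ M, ∀ B ∈ M, f B ≤ f A := by
  have hne : (M.map f).toFinset.Nonempty := by
    rw [Multiset.toFinset_nonempty]
    intro h
    exact hM (Multiset.map_eq_zero.1 h)
  set m := (M.map f).toFinset.max' hne with hm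
  have hmem : m ∈ M.map f := Multiset.mem_toFinset.1 ((M.map f).toFinset.max'_mem hne)
  obtain ⟨A, hA, hfa⟩ := Multiset.mem_map.1 hmem
  refine ⟨A, hA, fun B hB => ?_⟩
  rw [hfa]
  exact (M.map f).toFinset.le_max' (f B) (Multiset.mem_toFinset.2 (Multiset.mem_map_of_mem f hB))

lemma surplus_refine {s : ℕ} {X CT : Config} {F1 : Bunch} {t0 : ℕ}
    (hsur : above s CT F1 t0 < above s X F1 t0) :
    ∃ A ∈ X, AtLeast (2 * s) A = F1 ∧ t0 < A.count s ∧
      above s CT F1 (A.count s - 1) < above s X F1 (A.count s - 1) := by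
  set M := X.filter (fun B => AtLeast (2 * s) B = F1 ∧ t0 < B.count s) with hM
  have hMne : M ≠ 0 := by
    intro h
    have : above s X F1 t0 = 0 := by unfold above; rw [← hM, h]; rfl
    omega
  obtain ⟨A, hAM, hmin⟩ := exists_min_by hMne (fun B => B.count s)
  have hAX : A ∈ X := Multiset.mem_of_mem_filter hAM
  have hAfacts := Multiset.of_mem_filter hAM
  obtain ⟨hclsA, hcntA⟩ := hAfacts
  refine ⟨A, hAX, hclsA, hcntA, ?_⟩
  have e1 : above s X F1 (A.count s - 1) = above s X F1 t0 := by
    unfold above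
    congr 1
    apply Multiset.filter_congr
    intro B hB
    constructor
    · rintro ⟨h1, h2⟩; exact ⟨h1, by omega⟩
    · rintro ⟨h1, h2⟩
      have : A.count s ≤ B.count s := hmin B (Multiset.mem_filter.2 ⟨hB, h1, h2⟩)
      exact ⟨h1, by omega⟩
  have e2 : above s CT F1 (A.count s - 1) ≤ above s CT F1 t0 :=
    above_mono s CT F1 (by omega)
  omega

lemma deficit_refine {s : ℕ} {X CT : Config} {F2 : Bunch} {t1 : ℕ}
    (hmapcls : X.map (fun B => AtLeast (2 * s) B) = CT.map (fun B => AtLeast (2 * s) B))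
    (hdef : above s X F2 t1 < above s CT F2 t1) :
    ∃ A ∈ X, AtLeast (2 * s) A = F2 ∧ A.count s ≤ t1 ∧
      above s X F2 (A.count s) < above s CT F2 (A.count s) := by
  set M := X.filter (fun B => AtLeast (2 * s) B = F2 ∧ B.count s ≤ t1) with hM
  have hMne : M ≠ 0 := by
    intro h
    have hall : ∀ B ∈ X, AtLeast (2 * s) B = F2 → t1 < B.count s := by
      intro B hB hcls
      by_contra hle
      have : B ∈ M := Multiset.mem_filter.2 ⟨hB, hcls, by omega⟩
      rw [h] at this
      simp at this
    have e1 : above s X F2 t1 = Multiset.card (X.filter (fun B => AtLeast (2 * s) B = F2)) := by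
      unfold above
      congr 1
      apply Multiset.filter_congr
      intro B hB
      constructor
      · rintro ⟨h1, _⟩; exact h1
      · intro h1; exact ⟨h1, hall B hB h1⟩
    have e2 := classSize_eq hmapcls F2
    have e3 := above_le_classSize s CT F2 t1
    omega
  obtain ⟨A, hAM, hmax⟩ := exists_max_by hMne (fun B => B.count s)
  have hAX : A ∈ X := Multiset.mem_of_mem_filter hAM
  obtain ⟨hclsA, hcntA⟩ := Multiset.of_mem_filter hAM
  refine ⟨A, hAX, hclsA, hcntA, ?_⟩
  have e1 : above s X F2 (A.count s) = above s X F2 t1 := by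
    unfold above
    congr 1
    apply Multiset.filter_congr
    intro B hB
    constructor
    · rintro ⟨h1, h2⟩
      refine ⟨h1, ?_⟩
      by_contra hle
      have : B.count s ≤ A.count s := hmax B (Multiset.mem_filter.2 ⟨hB, h1, by omega⟩)
      omega
    · rintro ⟨h1, h2⟩; exact ⟨h1, by omega⟩
  have e2 : above s CT F2 t1 ≤ above s CT F2 (A.count s) :=
    above_mono s CT F2 hcntA
  omega

lemma dist_adjust {xold xnew b : ℕ} {P Q : Prop} [Decidable P] [Decidable Q]
    (h1 : xnew + (if P then 1 else 0) = xold + (if Q then 1 else 0))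
    (h2 : P → b < xold) (h3 : Q → xold < b) :
    Nat.dist xnew b ≤ Nat.dist xold b ∧ (P → Nat.dist xnew b < Nat.dist xold b) := by
  by_cases hp : P <;> by_cases hq : Q <;>
    simp only [hp, hq, if_true, if_false, add_zero] at h1
  · exact absurd (h3 hq) (by have := h2 hp; omega)
  · have := h2 hp
    simp only [Nat.dist]
    exact ⟨by omega, fun _ => by omega⟩
  · have := h3 hq
    simp only [Nat.dist]
    exact ⟨by omega, fun hp' => absurd hp' hp⟩
  · simp only [Nat.dist]
    exact ⟨by omega, fun hp' => absurd hp' hp⟩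
/- ==================== settle one level ==================== -/

lemma map_cls_of_map_atLeast {s : ℕ} {X Y : Config}
    (h : X.map (AtLeast s) = Y.map (AtLeast s)) :
    X.map (fun B => AtLeast (2 * s) B) = Y.map (fun B => AtLeast (2 * s) B) := by
  have e : ∀ Z : Config, Z.map (fun B => AtLeast (2 * s) B) =
      (Z.map (AtLeast s)).map (fun G => AtLeast (2 * s) G) := by
    intro Z
    rw [Multiset.map_map]
    exact Multiset.map_congr rfl (fun B _ => (cls_atLeast s B).symm)
  conv_lhs => rw [e X]
  conv_rhs => rw [e Y]
  rw [h]

lemma settle (κ s : ℕ) (hκ : ∃ k, κ = 2 ^ k) (hs : ∃ j, s = 2 ^ j) (CT : Config)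
    (hlegT : Legal κ CT) (hpwT : ∀ x ∈ CT.sum, ∃ i, x = 2 ^ i) :
    ∀ N X, psi κ s CT X ≤ N → Legal κ X → X.sum = CT.sum → s ≤ slackSum κ X →
      X.map (fun B => AtLeast (2 * s) B) = CT.map (fun B => AtLeast (2 * s) B) →
      ∃ X', Reconfigurable κ X X' ∧ X'.map (AtLeast s) = CT.map (AtLeast s) := by
  intro N
  induction N using Nat.strong_induction_on with
  | _ N ihN =>
  intro X hpsiN hlegX hsum hslack hmapcls
  have hs0 : 0 < s := pow_pos' hs
  have hpwX : ∀ x ∈ X.sum, ∃ i, x = 2 ^ i := by rw [hsum]; exact hpwT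
  by_cases hpsi0 : psi κ s CT X = 0
  · exact ⟨X, Relation.ReflTransGen.refl,
      psi_zero_map_eq hs hlegX hlegT hpwX hpwT hmapcls hpsi0⟩
  -- the index set
  have hmemX : ∀ B ∈ X, AtLeast (2 * s) B ∈ (CT.map (fun B => AtLeast (2 * s) B)).toFinset := by
    intro B hB
    rw [Multiset.mem_toFinset, ← hmapcls]
    exact Multiset.mem_map_of_mem _ hB
  have hmemT : ∀ B ∈ CT, AtLeast (2 * s) B ∈ (CT.map (fun B => AtLeast (2 * s) B)).toFinset :=
    fun B hB => Multiset.mem_toFinset.2 (Multiset.mem_map_of_mem _ hB)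
  have htot : ∑ p ∈ (CT.map (fun B => AtLeast (2 * s) B)).toFinset ×ˢ Finset.range (κ + 1),
      above s X p.1 p.2 =
      ∑ p ∈ (CT.map (fun B => AtLeast (2 * s) B)).toFinset ×ˢ Finset.range (κ + 1),
      above s CT p.1 p.2 := by
    rw [Finset.sum_product, Finset.sum_product,
      total_above κ s hs0 X _ hlegX hmemX, total_above κ s hs0 CT _ hlegT hmemT, hsum]
  have hexne : ∃ p ∈ (CT.map (fun B => AtLeast (2 * s) B)).toFinset ×ˢ Finset.range (κ + 1),
      above s X p.1 p.2 ≠ above s CT p.1 p.2 := by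
    by_contra hall
    push_neg at hall
    exact hpsi0 (Finset.sum_eq_zero (fun p hp => by rw [hall p hp, Nat.dist_self]))
  obtain ⟨p0, hp0P, hp0⟩ := hexne
  have hsurEx : ∃ p ∈ (CT.map (fun B => AtLeast (2 * s) B)).toFinset ×ˢ Finset.range (κ + 1),
      above s CT p.1 p.2 < above s X p.1 p.2 := by
    by_contra hno
    push_neg at hno
    have := Finset.sum_lt_sum hno ⟨p0, hp0P, lt_of_le_of_ne (hno p0 hp0P) hp0⟩
    omega
  have hdefEx : ∃ p ∈ (CT.map (fun B => AtLeast (2 * s) B)).toFinset ×ˢ Finset.range (κ + 1),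
      above s X p.1 p.2 < above s CT p.1 p.2 := by
    by_contra hno
    push_neg at hno
    have := Finset.sum_lt_sum hno ⟨p0, hp0P, lt_of_le_of_ne (hno p0 hp0P) (Ne.symm hp0)⟩
    omega
  obtain ⟨pS, hpSP, hpS⟩ := hsurEx
  obtain ⟨pD, hpDP, hpD⟩ := hdefEx
  obtain ⟨A0, hA0X, hclsA0, hcntA0, hsur0⟩ := surplus_refine hpS
  obtain ⟨R0, hR0X, hclsR0, hcntR0le, hdef0⟩ := deficit_refine hmapcls hpD
  rw [← hclsA0] at hsur0
  rw [← hclsR0] at hdef0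
  -- find distinct donor and receiver occurrences
  have hkey : ∃ Ad Ar, Ad ∈ X ∧ Ar ∈ X.erase Ad ∧ 0 < Ad.count s ∧
      above s CT (AtLeast (2 * s) Ad) (Ad.count s - 1) <
        above s X (AtLeast (2 * s) Ad) (Ad.count s - 1) ∧
      above s X (AtLeast (2 * s) Ar) (Ar.count s) <
        above s CT (AtLeast (2 * s) Ar) (Ar.count s) := by
    by_cases hsame : AtLeast (2 * s) A0 = AtLeast (2 * s) R0 ∧ A0.count s = R0.count s
    · -- at least two bunches with this (class, count)
      obtain ⟨hsF, hsc⟩ := hsame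
      have hdef0' : above s X (AtLeast (2 * s) A0) (A0.count s) <
          above s CT (AtLeast (2 * s) A0) (A0.count s) := by
        rw [hsF, hsc]; exact hdef0
      have hpart := above_partition s X (AtLeast (2 * s) A0) (A0.count s - 1)
      have hpartT := above_mono s CT (AtLeast (2 * s) A0)
        (show A0.count s - 1 ≤ A0.count s by omega)
      rw [show A0.count s - 1 + 1 = A0.count s from by omega] at hpart
      have hm2 : 2 ≤ Multiset.card (X.filter
          (fun B => AtLeast (2 * s) B = AtLeast (2 * s) A0 ∧ B.count s = A0.count s)) := by
        omega
      have hA0E : A0 ∈ X.filter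
          (fun B => AtLeast (2 * s) B = AtLeast (2 * s) A0 ∧ B.count s = A0.count s) :=
        Multiset.mem_filter.2 ⟨hA0X, rfl, rfl⟩
      have hcardE := Multiset.card_erase_of_mem hA0E
      have hEne : (X.filter
          (fun B => AtLeast (2 * s) B = AtLeast (2 * s) A0 ∧ B.count s = A0.count s)).erase A0
          ≠ 0 := by
        intro h
        rw [h] at hcardE
        simp at hcardE
        omega
      obtain ⟨Ar, hArE⟩ := Multiset.exists_mem_of_ne_zero hEne
      have hArX : Ar ∈ X.erase A0 := by
        have hle : (X.filter
            (fun B => AtLeast (2 * s) B = AtLeast (2 * s) A0 ∧ B.count s = A0.count s)).erase A0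
            ≤ X.erase A0 := Multiset.erase_le_erase A0 (Multiset.filter_le _ _)
        exact Multiset.mem_of_le hle hArE
      obtain ⟨hArcls, hArcnt⟩ := Multiset.of_mem_filter (Multiset.mem_of_mem_erase hArE)
      refine ⟨A0, Ar, hA0X, hArX, by omega, hsur0, ?_⟩
      rw [hArcls, hArcnt]
      exact hdef0'
    · have hne : A0 ≠ R0 := by
        intro h
        exact hsame (by rw [h]; exact ⟨rfl, rfl⟩)
      have hArX : R0 ∈ X.erase A0 := (Multiset.mem_erase_of_ne hne.symm).2 hR0X
      exact ⟨A0, R0, hA0X, hArX, by omega, hsur0, hdef0⟩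
  obtain ⟨Ad, Ar, hAdX, hArX', hcd1, hsurD, hdefD⟩ := hkey
  have hXeq : X = Ad ::ₘ Ar ::ₘ ((X.erase Ad).erase Ar) := by
    conv_lhs => rw [← Multiset.cons_erase hAdX, ← Multiset.cons_erase hArX']
  set rest := (X.erase Ad).erase Ar with hrest
  -- capacity witness for the receiver class
  have hWex : ∃ W ∈ CT, AtLeast (2 * s) W = AtLeast (2 * s) Ar ∧ Ar.count s < W.count s := by
    have hpos : 0 < above s CT (AtLeast (2 * s) Ar) (Ar.count s) := by omega
    have hne : CT.filter (fun B => AtLeast (2 * s) B = AtLeast (2 * s) Ar ∧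
        Ar.count s < B.count s) ≠ 0 := by
      intro h
      unfold above at hpos
      rw [h] at hpos
      simp at hpos
    obtain ⟨W, hW⟩ := Multiset.exists_mem_of_ne_zero hne
    exact ⟨W, Multiset.mem_of_mem_filter hW, (Multiset.of_mem_filter hW).1,
      (Multiset.of_mem_filter hW).2⟩
  obtain ⟨W, hWT, hWcls, hWcnt⟩ := hWex
  have hWpow : ∀ x ∈ W, ∃ i, x = 2 ^ i := fun x hx => hpwT x (mem_sum_of_mem hx hWT)
  have hArpow : ∀ x ∈ Ar, ∃ i, x = 2 ^ i := fun x hx =>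
    hpwX x (mem_sum_of_mem hx (Multiset.mem_of_mem_erase hArX'))
  have hvolrep : ∀ (n : ℕ), vol (Multiset.replicate n s) = n * s := by
    intro n; simp [vol, Multiset.sum_replicate, smul_eq_mul]
  have hvolW : vol (AtLeast (2 * s) W) + W.count s * s ≤ κ := by
    have h1 : vol (AtLeast s W) = vol (AtLeast (2 * s) W) + W.count s * s := by
      rw [atLeast_decomp hs hWpow, vol, Multiset.sum_add, ← hvolrep (W.count s)]
      rfl
    have h2 := vol_atLeast_le s W
    have h3 := hlegT W hWT
    omega
  have hroom : vol (AtLeast s Ar) + s ≤ κ := by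
    have h1 : vol (AtLeast s Ar) = vol (AtLeast (2 * s) Ar) + Ar.count s * s := by
      rw [atLeast_decomp hs hArpow, vol, Multiset.sum_add, ← hvolrep (Ar.count s)]
      rfl
    have hmul : (Ar.count s + 1) * s ≤ W.count s * s :=
      Nat.mul_le_mul_right s (by omega)
    rw [add_mul, one_mul] at hmul
    rw [hWcls] at hvolW
    omega
  -- prepare the receiver
  have hXeq2 : X = Ar ::ₘ Ad ::ₘ rest := by rw [hXeq, Multiset.cons_swap]
  have hlegArr : Legal κ (Ar ::ₘ Ad ::ₘ rest) := by rw [← hXeq2]; exact hlegX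
  obtain ⟨Ar', F0', hreachR, hAtAr', hmapF0', hvolAr'⟩ :=
    raiseSlack κ s hκ hs (vol Ar) Ar (Ad ::ₘ rest) rfl hlegArr
      (by rw [← hXeq2]; exact hpwX) (by rw [← hXeq2]; exact hslack) hroom
  -- recover the donor inside F0'
  have hAdmem : AtLeast s Ad ∈ F0'.map (AtLeast s) := by
    rw [hmapF0', Multiset.map_cons]
    exact Multiset.mem_cons_self _ _
  obtain ⟨Ad', hAd'F0, hgAd'⟩ := Multiset.mem_map.1 hAdmem
  set rest' := F0'.erase Ad' with hrest'
  have hF0eq : F0' = Ad' ::ₘ rest' := (Multiset.cons_erase hAd'F0).symm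
  have hclsAd' : AtLeast (2 * s) Ad' = AtLeast (2 * s) Ad := by
    rw [← cls_atLeast s Ad', hgAd', cls_atLeast]
  have hcntAd' : Ad'.count s = Ad.count s := by
    rw [← cnt_atLeast s Ad', hgAd', cnt_atLeast]
  have hclsAr' : AtLeast (2 * s) Ar' = AtLeast (2 * s) Ar := by
    rw [← cls_atLeast s Ar', hAtAr', cls_atLeast]
  have hcntAr' : Ar'.count s = Ar.count s := by
    rw [← cnt_atLeast s Ar', hAtAr', cnt_atLeast]
  have hX1e : Ar' ::ₘ F0' = Ad' ::ₘ Ar' ::ₘ rest' := by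
    rw [hF0eq, Multiset.cons_swap]
  have hreach1 : ReachLE κ (s - 1) X (Ad' ::ₘ Ar' ::ₘ rest') := by
    rw [hXeq2, ← hX1e]
    exact hreachR
  have hmapgX1 : (Ad' ::ₘ Ar' ::ₘ rest').map (AtLeast s) = X.map (AtLeast s) :=
    reachLE_map_atLeast (by omega) hreach1
  have hlegX1 : Legal κ (Ad' ::ₘ Ar' ::ₘ rest') := reachLE_legal hreach1 hlegX
  -- the move of one s item
  have hsAd' : s ∈ Ad' := by
    rw [← Multiset.count_pos, hcntAd']
    exact hcd1
  have hlegX2 : Legal κ (Ad'.erase s ::ₘ (s ::ₘ Ar') ::ₘ rest') := by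
    refine legal_cons.2 ⟨?_, legal_cons.2 ⟨?_, (legal_cons.1 (legal_cons.1 hlegX1).2).2⟩⟩
    · exact (vol_le_of_le (Multiset.erase_le _ _)).trans ((legal_cons.1 hlegX1).1)
    · rw [vol, Multiset.sum_cons]
      have : Multiset.sum Ar' = vol Ar' := rfl
      omega
  have hstep : Step κ (Ad' ::ₘ Ar' ::ₘ rest') (Ad'.erase s ::ₘ (s ::ₘ Ar') ::ₘ rest') :=
    ⟨hlegX1, hlegX2, s, rest', Ad', Ar', hsAd', by omega, rfl, rfl⟩
  have hreach2 : Reconfigurable κ X (Ad'.erase s ::ₘ (s ::ₘ Ar') ::ₘ rest') :=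
    (reachLE_reconf hreach1).tail hstep
  set X2 := Ad'.erase s ::ₘ (s ::ₘ Ar') ::ₘ rest' with hX2
  -- invariants
  have hsum2 : X2.sum = CT.sum := by rw [reach_sum hreach2, hsum]
  have hslack2 : s ≤ slackSum κ X2 := by rw [reach_slackSum hreach2]; exact hslack
  have hclsAd'' : AtLeast (2 * s) (Ad'.erase s) = AtLeast (2 * s) Ad := by
    rw [atLeast_erase_of_lt (by omega) hsAd', hclsAd']
  have hcntAd'' : (Ad'.erase s).count s = Ad.count s - 1 := by
    rw [Multiset.count_erase_self, hcntAd']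
  have hclsAr'' : AtLeast (2 * s) (s ::ₘ Ar') = AtLeast (2 * s) Ar := by
    rw [atLeast_cons_of_lt (by omega), hclsAr']
  have hcntAr'' : (s ::ₘ Ar').count s = Ar.count s + 1 := by
    rw [Multiset.count_cons_self, hcntAr']
  have hmapcls2 : X2.map (fun B => AtLeast (2 * s) B) =
      CT.map (fun B => AtLeast (2 * s) B) := by
    have e1 : X2.map (fun B => AtLeast (2 * s) B) =
        (Ad' ::ₘ Ar' ::ₘ rest').map (fun B => AtLeast (2 * s) B) := by
      simp only [hX2, Multiset.map_cons]
      rw [hclsAd'', hclsAr'', hclsAd', hclsAr']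
    rw [e1, map_cls_of_map_atLeast hmapgX1, hmapcls]
  -- decompositions of `above`
  have haboveX : ∀ F t, above s X F t =
      (if AtLeast (2 * s) Ad = F ∧ t < Ad.count s then 1 else 0) +
      ((if AtLeast (2 * s) Ar = F ∧ t < Ar.count s then 1 else 0) + above s rest' F t) := by
    intro F t
    rw [← above_congr hmapgX1 F t, above_cons, above_cons, hclsAd', hcntAd', hclsAr', hcntAr']
  have haboveX2 : ∀ F t, above s X2 F t =
      (if AtLeast (2 * s) Ad = F ∧ t < Ad.count s - 1 then 1 else 0) +
      ((if AtLeast (2 * s) Ar = F ∧ t < Ar.count s + 1 then 1 else 0) + above s rest' F t) := by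
    intro F t
    rw [hX2, above_cons, above_cons, hclsAd'', hcntAd'', hclsAr'', hcntAr'']
  -- pointwise distance comparison
  have h1gen : ∀ F t, above s X2 F t +
      (if AtLeast (2 * s) Ad = F ∧ t = Ad.count s - 1 then 1 else 0) =
      above s X F t + (if AtLeast (2 * s) Ar = F ∧ t = Ar.count s then 1 else 0) := by
    intro F t
    rw [haboveX F t, haboveX2 F t]
    by_cases hf1 : AtLeast (2 * s) Ad = F <;> by_cases hf2 : AtLeast (2 * s) Ar = F <;>
      simp only [hf1, hf2, true_and, false_and, if_false] <;> split_ifs <;> omega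
  have h2gen : ∀ F t, (AtLeast (2 * s) Ad = F ∧ t = Ad.count s - 1) →
      above s CT F t < above s X F t := by
    rintro F t ⟨hf, ht⟩
    rw [← hf, ht]
    exact hsurD
  have h3gen : ∀ F t, (AtLeast (2 * s) Ar = F ∧ t = Ar.count s) →
      above s X F t < above s CT F t := by
    rintro F t ⟨hf, ht⟩
    rw [← hf, ht]
    exact hdefD
  have hall : ∀ F t, Nat.dist (above s X2 F t) (above s CT F t) ≤
      Nat.dist (above s X F t) (above s CT F t) ∧
      ((AtLeast (2 * s) Ad = F ∧ t = Ad.count s - 1) →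
        Nat.dist (above s X2 F t) (above s CT F t) <
        Nat.dist (above s X F t) (above s CT F t)) :=
    fun F t => dist_adjust (h1gen F t) (h2gen F t) (h3gen F t)
  have hmemP : (AtLeast (2 * s) Ad, Ad.count s - 1) ∈
      (CT.map (fun B => AtLeast (2 * s) B)).toFinset ×ˢ Finset.range (κ + 1) := by
    refine Finset.mem_product.2 ⟨hmemX Ad hAdX, Finset.mem_range.2 ?_⟩
    have := cnt_le_kappa hs0 (hlegX Ad hAdX)
    omega
  have hlt : psi κ s CT X2 < psi κ s CT X := by
    unfold psi
    exact Finset.sum_lt_sum (fun p _ => (hall p.1 p.2).1)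
      ⟨(AtLeast (2 * s) Ad, Ad.count s - 1), hmemP, (hall _ _).2 ⟨rfl, rfl⟩⟩
  obtain ⟨X', hreach', hmap'⟩ := ihN (psi κ s CT X2) (by omega) X2 (le_refl _)
    hlegX2 hsum2 hslack2 hmapcls2
  exact ⟨X', hreach2.trans hreach', hmap'⟩
/- ==================== Settled vs map equality ==================== -/

lemma mem_sum_exists {x : ℕ} {C : Config} (hx : x ∈ C.sum) : ∃ B ∈ C, x ∈ B := by
  induction C using Multiset.induction_on with
  | empty => simp [Multiset.sum_zero] at hx
  | cons a t ih =>
    rw [Multiset.sum_cons] at hx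
    rcases Multiset.mem_add.1 hx with h | h
    · exact ⟨a, Multiset.mem_cons_self a t, h⟩
    · obtain ⟨B, hB, hxB⟩ := ih h
      exact ⟨B, Multiset.mem_cons_of_mem hB, hxB⟩

lemma settled_iff_filtered (s : ℕ) (D CT : Config) :
    Settled s D CT ↔ (BunchesWith s D).map (AtLeast s) = (BunchesWith s CT).map (AtLeast s) := by
  unfold Settled
  rw [← Multiset.rel_eq, ← Multiset.rel_map]

lemma bunchesWith_map (s : ℕ) (X : Config) :
    (BunchesWith s X).map (AtLeast s) = (X.map (AtLeast s)).filter (· ≠ 0) := by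
  rw [Multiset.filter_map]
  unfold BunchesWith
  congr 1
  apply Multiset.filter_congr
  intro B _
  simp only [Function.comp]
  constructor
  · rintro ⟨x, hx, hsx⟩
    intro h0
    have : x ∈ AtLeast s B := Multiset.mem_filter.2 ⟨hx, hsx⟩
    rw [h0] at this
    simp at this
  · intro h0
    by_contra hno
    push_neg at hno
    exact h0 (Multiset.filter_eq_nil.2 (fun x hx h => by have := hno x hx; omega))

lemma eq_of_filter_ne_zero_eq {M N : Multiset Bunch}
    (hc : Multiset.card M = Multiset.card N)
    (h : M.filter (· ≠ 0) = N.filter (· ≠ 0)) : M = N := by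
  have hM := Multiset.filter_add_not (fun B : Bunch => B ≠ 0) M
  have hN := Multiset.filter_add_not (fun B : Bunch => B ≠ 0) N
  have hcM : Multiset.card (M.filter (fun B => ¬B ≠ 0)) =
      Multiset.card (N.filter (fun B => ¬B ≠ 0)) := by
    have := congrArg Multiset.card hM
    have := congrArg Multiset.card hN
    have := congrArg Multiset.card h
    simp only [Multiset.card_add] at *
    omega
  have hrep : ∀ (K : Multiset Bunch), K.filter (fun B => ¬B ≠ 0) =
      Multiset.replicate (Multiset.card (K.filter (fun B => ¬B ≠ 0))) 0 := by
    intro K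
    rw [Multiset.eq_replicate]
    exact ⟨rfl, fun b hb => by simpa using (Multiset.of_mem_filter hb)⟩
  rw [← hM, ← hN, h, hrep M, hrep N, hcM]

lemma settled_iff_map {s : ℕ} {D CT : Config}
    (hcard : Multiset.card D = Multiset.card CT) :
    Settled s D CT ↔ D.map (AtLeast s) = CT.map (AtLeast s) := by
  rw [settled_iff_filtered, bunchesWith_map, bunchesWith_map]
  constructor
  · intro h
    exact eq_of_filter_ne_zero_eq (by rw [Multiset.card_map, Multiset.card_map, hcard]) h
  · intro h
    rw [h]

lemma settled_of_map {s : ℕ} {D CT : Config}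
    (h : D.map (AtLeast s) = CT.map (AtLeast s)) : Settled s D CT := by
  rw [settled_iff_filtered, bunchesWith_map, bunchesWith_map, h]

/- ==================== forward direction ==================== -/

lemma step_map_atLeast_of_slack {κ ℓ : ℕ} {C C' : Config} (h : Step κ C C')
    (hsl : slackSum κ C < ℓ) : C'.map (AtLeast ℓ) = C.map (AtLeast ℓ) := by
  obtain ⟨hl1, hl2, u, adj⟩ := h
  obtain ⟨rest, Bd, Br, hu, hcap, hC, hC'⟩ := adj
  have hslmem : κ - vol Br ≤ slackSum κ C := by
    rw [hC, slackSum_cons, slackSum_cons]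
    omega
  have huℓ : u < ℓ := by omega
  exact stepLE_map_atLeast huℓ ⟨hl1, hl2, u, le_refl u, rest, Bd, Br, hu, hcap, hC, hC'⟩

lemma reconf_map_atLeast_of_slack {κ ℓ : ℕ} {CS CT : Config}
    (h : Reconfigurable κ CS CT) (hsl : slackSum κ CS < ℓ) :
    CT.map (AtLeast ℓ) = CS.map (AtLeast ℓ) := by
  induction h with
  | refl => rfl
  | tail hrt hs ih =>
    have hslack : slackSum κ _ = slackSum κ CS := reach_slackSum hrt
    rw [step_map_atLeast_of_slack hs (by omega), ih]

/- ==================== level induction ==================== -/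

lemma levels (κ : ℕ) (hκ : ∃ k, κ = 2 ^ k) (CT : Config) (hlegT : Legal κ CT)
    (hpwT : ∀ x ∈ CT.sum, ∃ i, x = 2 ^ i) :
    ∀ j (X : Config), Legal κ X → X.sum = CT.sum →
      X.map (fun B => AtLeast (2 ^ j) B) = CT.map (fun B => AtLeast (2 ^ j) B) →
      2 ^ j ≤ 2 * slackSum κ X → Reconfigurable κ X CT := by
  intro j
  induction j with
  | zero =>
    intro X hlegX hsum hmap _
    have e : ∀ Z : Config, (∀ x ∈ Z.sum, ∃ i, x = 2 ^ i) →
        Z.map (fun B => AtLeast (2 ^ 0) B) = Z.map id := by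
      intro Z hpw
      apply Multiset.map_congr rfl
      intro B hB
      simp only [pow_zero, id]
      exact Multiset.filter_eq_self.2
        (fun x hx => pow_pos' (hpw x (mem_sum_of_mem hx hB)))
    have hpwX : ∀ x ∈ X.sum, ∃ i, x = 2 ^ i := by rw [hsum]; exact hpwT
    have : X = CT := by
      have h1 := e X hpwX
      have h2 := e CT hpwT
      rw [h1, h2] at hmap
      simpa using hmap
    rw [this]
    exact Relation.ReflTransGen.refl
  | succ j ih =>
    intro X hlegX hsum hmap hslack
    have h2s : 2 * 2 ^ j = 2 ^ (j + 1) := by rw [pow_succ]; ring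
    have hsle : 2 ^ j ≤ slackSum κ X := by
      have : (2:ℕ) ^ (j + 1) = 2 * 2 ^ j := h2s.symm
      omega
    have hmap' : X.map (fun B => AtLeast (2 * 2 ^ j) B) =
        CT.map (fun B => AtLeast (2 * 2 ^ j) B) := by
      rw [h2s]; exact hmap
    obtain ⟨X', hreach, hmap2⟩ := settle κ (2 ^ j) hκ ⟨j, rfl⟩ CT hlegT hpwT
      (psi κ (2 ^ j) CT X) X (le_refl _) hlegX hsum hsle hmap'
    have hlegX' : Legal κ X' := reach_legal hreach hlegX
    have hsum' : X'.sum = CT.sum := by rw [reach_sum hreach, hsum]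
    have hslack' : 2 ^ j ≤ 2 * slackSum κ X' := by
      rw [reach_slackSum hreach]
      omega
    exact hreach.trans (ih X' hlegX' hsum' hmap2 hslack')
/- ==================== main theorem ==================== -/

theorem stmt6 (κ : ℕ) (hκ : ∃ k, κ = 2 ^ k) (CS CT : Config)
    (hS : Legal κ CS) (hT : Legal κ CT)
    (hcard : Multiset.card CS = Multiset.card CT) (hU : CS.sum = CT.sum)
    (hpow : ∀ x ∈ CS.sum, ∃ j, x = 2 ^ j)
    (ℓ : ℕ) (hℓmem : ℓ ∈ CS.sum) (hℓns : ¬ Settled ℓ CS CT)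
    (hℓmax : ∀ s ∈ CS.sum, ¬ Settled s CS CT → s ≤ ℓ) :
    Reconfigurable κ CS CT ↔ ℓ ≤ slackSum κ CS := by
  constructor
  · intro hreconf
    by_contra hlt
    push_neg at hlt
    exact hℓns (settled_of_map (reconf_map_atLeast_of_slack hreconf hlt).symm)
  · intro hle
    obtain ⟨m, hm⟩ := hpow ℓ hℓmem
    have hℓpos : 0 < ℓ := pow_pos' ⟨m, hm⟩
    obtain ⟨B0, hB0CS, hℓB0⟩ := mem_sum_exists hℓmem
    have hℓκ : ℓ ≤ κ := (le_vol hℓB0).trans (hS B0 hB0CS)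
    have hQ : CS.map (fun B => AtLeast (2 * ℓ) B) = CT.map (fun B => AtLeast (2 * ℓ) B) := by
      by_cases hT0 : CS.sum.filter (fun x => ℓ < x) = 0
      · have hnone : ∀ x ∈ CS.sum, ¬ ℓ < x := Multiset.filter_eq_nil.1 hT0
        have e : ∀ Z : Config, Z.sum = CS.sum →
            Z.map (fun B => AtLeast (2 * ℓ) B) =
              Multiset.replicate (Multiset.card Z) (0 : Bunch) := by
          intro Z hZ
          rw [Multiset.eq_replicate]
          refine ⟨Multiset.card_map _ _, ?_⟩
          intro b hb
          obtain ⟨B, hB, rfl⟩ := Multiset.mem_map.1 hb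
          apply Multiset.filter_eq_nil.2
          intro x hx h2x
          exact hnone x (hZ ▸ mem_sum_of_mem hx hB) (by omega)
        rw [e CS rfl, e CT hU.symm, hcard]
      · obtain ⟨t, htT, htmin⟩ := min_item_exists hT0
        have ht1 : t ∈ CS.sum := Multiset.mem_of_mem_filter htT
        have ht2 : ℓ < t := Multiset.of_mem_filter htT
        have hst : Settled t CS CT := by
          by_contra hns
          exact absurd (hℓmax t ht1 hns) (by omega)
        have hmapt : CS.map (AtLeast t) = CT.map (AtLeast t) := (settled_iff_map hcard).1 hst
        have ht2ℓ : 2 * ℓ ≤ t := pow_two_le_of_lt ⟨m, hm⟩ (hpow t ht1) ht2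
        have e : ∀ Z : Config, Z.sum = CS.sum →
            Z.map (fun B => AtLeast (2 * ℓ) B) = Z.map (AtLeast t) := by
          intro Z hZ
          apply Multiset.map_congr rfl
          intro B hB
          apply Multiset.filter_congr
          intro x hx
          have hxs : x ∈ CS.sum := hZ ▸ mem_sum_of_mem hx hB
          constructor
          · intro h
            exact htmin x (Multiset.mem_filter.2 ⟨hxs, by omega⟩)
          · intro h
            omega
        rw [e CS rfl, e CT hU.symm, hmapt]
    have h2ℓ : 2 * ℓ = 2 ^ (m + 1) := by rw [hm, pow_succ]; ring
    refine levels κ hκ CT hT (by rw [← hU]; exact hpow) (m + 1) CS hS hU ?_ ?_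
    · rw [← h2ℓ]
      exact hQ
    · rw [← h2ℓ]
      omega
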